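/- arXiv:1002.2262 — 3 statements merged into one kernel-verified Lean document; each statement's English description precedes it below -/
import Mathlib

section
/- Let n ≥ 1, let d : Fin n → ℂ be a function with d(i) ∈ {1, -1} for every i, and let D be the n×n diagonal matrix over ℂ with diagonal entries d(i) (so D² = 1 and D⁻¹ = D). Then the following are equivalent: (i) there exists an n×n complex matrix g with gᵀ g = 1 and det g = 1 such that D X D = g X g⁻¹ for every n×n complex matrix X satisfying Xᵀ = -X; (ii) the number of indices i with d(i) = -1 is even, or the number of indices i with d(i) = 1 is even. -/
open Matrix

/-- **Inner conjugation criterion for diagonal sign matrices on `𝔰𝔬_n(ℂ)`.**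
Let `n ≥ 1`, let `d : Fin n → ℂ` take values in `{1, -1}`, and let `D` be the diagonal
matrix with entries `d i`.  Then conjugation by `D` on skew-symmetric matrices is
realized by conjugation by some `g ∈ SO(n, ℂ)` if and only if the number of indices
with `d i = -1` is even, or the number of indices with `d i = 1` is even. -/
theorem diagonal_sign_inner_iff_even
    {n : ℕ} (hn : 1 ≤ n) (d : Fin n → ℂ) (hd : ∀ i, d i = 1 ∨ d i = -1) :
    (∃ g : Matrix (Fin n) (Fin n) ℂ, gᵀ * g = 1 ∧ g.det = 1 ∧
        ∀ X : Matrix (Fin n) (Fin n) ℂ, Xᵀ = -X →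
          Matrix.diagonal d * X * Matrix.diagonal d = g * X * g⁻¹) ↔
      (Even (Finset.univ.filter (fun i => d i = -1)).card ∨
        Even (Finset.univ.filter (fun i => d i = 1)).card) := by
  have hD2 : Matrix.diagonal d * Matrix.diagonal d = 1 := by
    rw [diagonal_mul_diagonal]
    have h : (fun i => d i * d i) = fun _ => (1 : ℂ) := by
      funext i; rcases hd i with h | h <;> rw [h] <;> ring
    rw [h, diagonal_one]
  have hDinv : (Matrix.diagonal d)⁻¹ = Matrix.diagonal d := inv_eq_right_inv hD2
  have hcard : (Finset.univ.filter (fun i => d i = -1)).card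
      + (Finset.univ.filter (fun i => d i = 1)).card = n := by
    have h1 : (Finset.univ.filter (fun i => d i = 1))
        = (Finset.univ.filter (fun i => ¬ d i = -1)) := by
      ext i
      simp only [Finset.mem_filter, Finset.mem_univ, true_and]
      constructor
      · intro h h'; rw [h] at h'; norm_num at h'
      · intro h; rcases hd i with h' | h'
        · exact h'
        · exact absurd h' h
    rw [h1, Finset.card_filter_add_card_filter_not, Finset.card_univ,
      Fintype.card_fin]
  have hprodm : (Matrix.diagonal d).det
      = (-1 : ℂ) ^ (Finset.univ.filter (fun i => d i = -1)).card := by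
    rw [det_diagonal,
      ← Finset.prod_filter_mul_prod_filter_not Finset.univ (fun i => d i = -1)]
    have h1 : ∏ i ∈ Finset.univ.filter (fun i => d i = -1), d i
        = (-1 : ℂ) ^ (Finset.univ.filter (fun i => d i = -1)).card := by
      rw [Finset.prod_congr rfl (fun i hi => (Finset.mem_filter.1 hi).2),
        Finset.prod_const]
    have h2 : ∏ i ∈ Finset.univ.filter (fun i => ¬ d i = -1), d i = 1 := by
      apply Finset.prod_eq_one
      intro i hi
      rcases hd i with h' | h'
      · exact h'
      · exact absurd h' (Finset.mem_filter.1 hi).2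
    rw [h1, h2, mul_one]
  constructor
  · rintro ⟨g, hg1, hg2, hg3⟩
    by_contra hne
    push_neg at hne
    obtain ⟨hm, hp⟩ := hne
    rw [Nat.not_even_iff_odd] at hm hp
    have hnev : Even n := by rw [← hcard]; exact hm.add_odd hp
    have hgu : IsUnit g.det := by rw [hg2]; exact isUnit_one
    have hgl : g⁻¹ * g = 1 := nonsing_inv_mul g hgu
    have hgr : g * g⁻¹ = 1 := mul_nonsing_inv g hgu
    rcases lt_or_ge n 3 with h3 | h3
    · -- n = 2 case
      have hn2 : n = 2 := by obtain ⟨r, hr⟩ := hnev; omega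
      subst hn2
      have hprod : d 0 * d 1 = -1 := by
        rcases hd 0 with h0 | h0 <;> rcases hd 1 with h1 | h1
        · exfalso
          have hall : ∀ i : Fin 2, d i = 1 := by
            intro i; fin_cases i; exacts [h0, h1]
          have he : (Finset.univ.filter (fun i => d i = -1)) = ∅ := by
            apply Finset.filter_eq_empty_iff.2
            intro i _
            rw [hall i]; norm_num
          rw [he] at hm
          norm_num at hm
        · rw [h0, h1]; ring
        · rw [h0, h1]; ring
        · exfalso
          have hall : ∀ i : Fin 2, d i = -1 := by
            intro i; fin_cases i; exacts [h0, h1]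
          have he : (Finset.univ.filter (fun i => d i = 1)) = ∅ := by
            apply Finset.filter_eq_empty_iff.2
            intro i _
            rw [hall i]; norm_num
          rw [he] at hp
          norm_num at hp
      have hgt : g⁻¹ = gᵀ := inv_eq_left_inv hg1
      have hadj : g⁻¹ = g.adjugate := by
        rw [Matrix.inv_def, hg2]; simp
      have hge : gᵀ = g.adjugate := hgt.symm.trans hadj
      rw [Matrix.adjugate_fin_two] at hge
      have e1 : g 0 0 = g 1 1 := by
        have := congrFun (congrFun hge 0) 0
        simpa using this
      have e2 : g 1 0 = -g 0 1 := by
        have := congrFun (congrFun hge 0) 1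
        simpa using this
      set J : Matrix (Fin 2) (Fin 2) ℂ := !![0, 1; -1, 0] with hJ
      have hJskew : Jᵀ = -J := by
        ext i j
        fin_cases i <;> fin_cases j <;> simp [hJ]
      have hcommJ : g * J = J * g := by
        ext i j
        fin_cases i <;> fin_cases j <;>
          simp [hJ, Matrix.mul_apply, Fin.sum_univ_two] <;>
          first
          | linear_combination e1
          | linear_combination -e1
          | linear_combination e2
          | linear_combination -e2
          | ring
      have hgJg : g * J * g⁻¹ = J := by rw [hcommJ, mul_assoc, hgr, mul_one]
      have hmain := hg3 J hJskew
      rw [hgJg] at hmain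
      have e := congrFun (congrFun hmain 0) 1
      simp [Matrix.mul_diagonal, Matrix.diagonal_mul, hJ] at e
      have : (-1 : ℂ) = 1 := by rw [← hprod]; linear_combination e
      norm_num at this
    · -- n ≥ 3 case
      have key : ∀ X : Matrix (Fin n) (Fin n) ℂ, Xᵀ = -X →
          (g⁻¹ * Matrix.diagonal d) * X = X * (g⁻¹ * Matrix.diagonal d) := by
        intro X hX
        have h1 := hg3 X hX
        have h2 : g⁻¹ * (Matrix.diagonal d * X * Matrix.diagonal d) * Matrix.diagonal d
            = g⁻¹ * (g * X * g⁻¹) * Matrix.diagonal d := by rw [h1]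
        have lhs : g⁻¹ * (Matrix.diagonal d * X * Matrix.diagonal d) * Matrix.diagonal d
            = (g⁻¹ * Matrix.diagonal d) * X := by
          simp only [mul_assoc, hD2, mul_one]
        have rhs : g⁻¹ * (g * X * g⁻¹) * Matrix.diagonal d
            = X * (g⁻¹ * Matrix.diagonal d) := by
          simp only [mul_assoc]
          rw [← mul_assoc g⁻¹ g, hgl, one_mul]
        rw [← lhs, h2, rhs]
      have hT : ∀ i j : Fin n, (Matrix.single i j (1 : ℂ))ᵀ
          = Matrix.single j i 1 := by
        intro i j
        ext k l
        simp [Matrix.transpose_apply, Matrix.single, and_comm]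
      have hcomm : ∀ i j : Fin n, i ≠ j →
          (g⁻¹ * Matrix.diagonal d) * (Matrix.single i j 1 - Matrix.single j i 1)
            = (Matrix.single i j 1 - Matrix.single j i 1)
              * (g⁻¹ * Matrix.diagonal d) := by
        intro i j hij
        apply key
        rw [transpose_sub, hT, hT, neg_sub]
      set w := g⁻¹ * Matrix.diagonal d with hw
      have hoff : ∀ k i : Fin n, k ≠ i → w k i = 0 := by
        intro k i hki
        obtain ⟨j, hjk, hji⟩ : ∃ j : Fin n, j ≠ k ∧ j ≠ i := by
          by_contra hc
          push_neg at hc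
          have hsub : (Finset.univ : Finset (Fin n)) ⊆ {k, i} := by
            intro j _
            rcases eq_or_ne j k with rfl | hne
            · simp
            · simp [hc j hne]
          have hle := Finset.card_le_card hsub
          simp only [Finset.card_univ, Fintype.card_fin] at hle
          have h2 : ({k, i} : Finset (Fin n)).card ≤ 2 :=
            (Finset.card_insert_le _ _).trans (by simp)
          omega
        have e := congrFun (congrFun (hcomm i j (Ne.symm hji)) k) j
        simp [Matrix.mul_sub, Matrix.sub_mul, Matrix.sub_apply, hki, hjk, hji,
          hjk.symm, hji.symm, Ne.symm hki] at e
        exact e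
      have hdiag : ∀ i j : Fin n, i ≠ j → w i i = w j j := by
        intro i j hij
        have e := congrFun (congrFun (hcomm i j hij) i) j
        simp [Matrix.mul_sub, Matrix.sub_mul, Matrix.sub_apply, hij,
          Ne.symm hij] at e
        exact e
      set i0 : Fin n := ⟨0, hn⟩ with hi0
      set c := w i0 i0 with hc
      have hscal : w = c • (1 : Matrix (Fin n) (Fin n) ℂ) := by
        ext k l
        rcases eq_or_ne k l with rfl | hkl
        · rcases eq_or_ne k i0 with rfl | hki0
          · simp [Matrix.smul_apply, Matrix.one_apply_eq, hc]
          · rw [hdiag k i0 hki0]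
            simp [Matrix.smul_apply, Matrix.one_apply_eq, hc]
        · simp [hoff k l hkl, Matrix.smul_apply, Matrix.one_apply_ne hkl]
      have hDg : Matrix.diagonal d = c • g := by
        have hgw : g * w = Matrix.diagonal d := by
          rw [hw, ← mul_assoc, hgr, one_mul]
        rw [← hgw, hscal, Matrix.mul_smul, mul_one]
      have hc2 : c ^ 2 = 1 := by
        have h1 : (Matrix.diagonal d)ᵀ * Matrix.diagonal d = 1 := by
          rw [diagonal_transpose, hD2]
        rw [hDg, transpose_smul, smul_mul_assoc, Matrix.mul_smul, hg1] at h1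
        have e := congrFun (congrFun h1 i0) i0
        simp [Matrix.smul_apply, Matrix.one_apply_eq] at e
        rw [pow_two]
        linear_combination e
      have hdetD : (Matrix.diagonal d).det = -1 := by
        rw [hprodm]; exact hm.neg_one_pow
      have hcn : c ^ n = 1 := by
        obtain ⟨r, hr⟩ := hnev
        rw [hr, ← two_mul, pow_mul, hc2, one_pow]
      have hfin : (Matrix.diagonal d).det = 1 := by
        rw [hDg, det_smul, hg2, mul_one, Fintype.card_fin, hcn]
      rw [hdetD] at hfin
      norm_num at hfin
  · intro hcases
    rcases hcases with hm | hp
    · refine ⟨Matrix.diagonal d, ?_, ?_, ?_⟩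
      · rw [diagonal_transpose, hD2]
      · rw [hprodm]; exact hm.neg_one_pow
      · intro X hX
        rw [hDinv]
    · refine ⟨-Matrix.diagonal d, ?_, ?_, ?_⟩
      · rw [transpose_neg, diagonal_transpose, neg_mul_neg, hD2]
      · rw [det_neg, hprodm, Fintype.card_fin, ← pow_add]
        have he : n + (Finset.univ.filter (fun i => d i = -1)).card
            = 2 * (Finset.univ.filter (fun i => d i = -1)).card
              + (Finset.univ.filter (fun i => d i = 1)).card := by omega
        rw [he, pow_add, pow_mul]
        norm_num [hp.neg_one_pow]
      · intro X hX
        have hninv : (-Matrix.diagonal d)⁻¹ = -Matrix.diagonal d :=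
          inv_eq_right_inv (by rw [neg_mul_neg, hD2])
        rw [hninv, neg_mul, mul_neg, neg_mul, neg_neg]
end

section
/- Let L be a Lie algebra over ℂ, let V be a complex vector space, and let ρ : L → End(V) be a representation of L on V. Suppose x ∈ L is such that ad x : L → L is locally nilpotent (for every y ∈ L there is n with (ad x)^n y = 0) and ρ(x) : V → V is locally nilpotent (for every v ∈ V there is n with ρ(x)^n v = 0). Define E : V → V by E(v) = Σ_{k=0}^{n-1} (1/k!) ρ(x)^k v for any n with ρ(x)^n v = 0, and define e : L → L by e(y) = Σ_{k=0}^{n-1} (1/k!) (ad x)^k y for any n with (ad x)^n y = 0 (these are well defined by local nilpotency). Then E is a bijective ℂ-linear map and E(ρ(y) v) = ρ(e(y)) (E v) for all y ∈ L and v ∈ V; in other words, E is an isomorphism from the representation (V, ρ) to the representation (V, ρ ∘ exp(ad x)). -/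
open Finset

section Aux

lemma sum_antidiag_core {γ : Type*} [AddCommMonoid γ] (g : ℕ × ℕ → γ) (M : ℕ) :
    ∑ m ∈ range M, ∑ p ∈ Finset.HasAntidiagonal.antidiagonal m, g p
      = ∑ p ∈ (range M ×ˢ range M).filter (fun p => p.1 + p.2 < M), g p := by
  rw [Finset.sum_sigma']
  apply Finset.sum_nbij' (i := fun p => p.2) (j := fun p => ⟨p.1 + p.2, p⟩)
  · rintro ⟨m, p⟩ hp
    simp only [mem_sigma, mem_range, Finset.HasAntidiagonal.mem_antidiagonal] at hp
    simp only [mem_filter, mem_product, mem_range]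
    omega
  · rintro p hp
    simp only [mem_filter, mem_product, mem_range] at hp
    simp only [mem_sigma, mem_range, Finset.HasAntidiagonal.mem_antidiagonal]
    exact ⟨hp.2, trivial⟩
  · rintro ⟨m, p⟩ hp
    simp only [mem_sigma, mem_range, Finset.HasAntidiagonal.mem_antidiagonal] at hp
    simp [hp.2]
  · rintro p hp; rfl
  · rintro p hp; rfl

variable {R : Type*} {W : Type*} [CommRing R] [AddCommGroup W] [Module R W]

lemma pow_apply_zero_mono (A : Module.End R W) {v : W} {n N : ℕ}
    (h : (A ^ n) v = 0) (hn : n ≤ N) : (A ^ N) v = 0 := by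
  rw [← Nat.sub_add_cancel hn, pow_add, Module.End.mul_apply, h, map_zero]

lemma neg_pow_apply (A : Module.End R W) (v : W) (j : ℕ) :
    ((-A) ^ j) v = ((-1 : R) ^ j) • (A ^ j) v := by
  rw [show -A = (-1 : R) • A from (neg_one_smul R A).symm, smul_pow, LinearMap.smul_apply]

lemma sum_stable (A : Module.End R W) (c : ℕ → R) (v : W) {n N : ℕ}
    (h : (A ^ n) v = 0) (hnN : n ≤ N) :
    ∑ k ∈ range N, c k • (A ^ k) v = ∑ k ∈ range n, c k • (A ^ k) v := by
  refine (Finset.sum_subset (Finset.range_subset_range.mpr hnN) fun k _ hk => ?_).symm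
  rw [pow_apply_zero_mono A h (le_of_not_gt (fun hc => hk (mem_range.mpr hc))), smul_zero]

lemma alt_inv_factorial_sum (m : ℕ) :
    ∑ p ∈ Finset.HasAntidiagonal.antidiagonal m,
        ((Nat.factorial p.1 : ℂ)⁻¹ * (Nat.factorial p.2 : ℂ)⁻¹ * (-1 : ℂ) ^ p.2) = if m = 0 then 1 else 0 := by
  have h := (Commute.all (1 : ℂ) (-1)).add_pow' m
  have h0 : ((1 : ℂ) + -1) = 0 := by ring
  rw [h0] at h
  have key : ∀ p ∈ Finset.HasAntidiagonal.antidiagonal m,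
      ((Nat.factorial p.1 : ℂ)⁻¹ * (Nat.factorial p.2 : ℂ)⁻¹ * (-1 : ℂ) ^ p.2)
        = (m.choose p.1 • ((1 : ℂ) ^ p.1 * (-1 : ℂ) ^ p.2)) * (Nat.factorial m : ℂ)⁻¹ := by
    intro p hp
    rw [Finset.HasAntidiagonal.mem_antidiagonal] at hp
    have h1 : p.1 ≤ m := by omega
    have h2 : m - p.1 = p.2 := by omega
    have hfac := Nat.choose_mul_factorial_mul_factorial h1
    rw [h2] at hfac
    have hfacC : ((m.choose p.1 : ℂ)) * (Nat.factorial p.1 : ℂ) * (Nat.factorial p.2 : ℂ) = (Nat.factorial m : ℂ) := by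
      exact_mod_cast congrArg (Nat.cast (R := ℂ)) hfac
    have hp1 : (Nat.factorial p.1 : ℂ) ≠ 0 := Nat.cast_ne_zero.mpr (Nat.factorial_ne_zero _)
    have hp2 : (Nat.factorial p.2 : ℂ) ≠ 0 := Nat.cast_ne_zero.mpr (Nat.factorial_ne_zero _)
    have hm : (Nat.factorial m : ℂ) ≠ 0 := Nat.cast_ne_zero.mpr (Nat.factorial_ne_zero _)
    rw [nsmul_eq_mul]
    field_simp
    rw [← hfacC]
    ring
  rw [Finset.sum_congr rfl key, ← Finset.sum_mul, ← h]
  rcases Nat.eq_zero_or_pos m with hm | hm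
  · simp [hm]
  · rw [zero_pow ((by omega : m ≠ 0)), if_neg ((by omega : m ≠ 0)), zero_mul]


section ExpProd
variable {V : Type*} [AddCommGroup V] [Module ℂ V]

lemma exp_mul_exp_neg_apply (A : Module.End ℂ V) (v : V) (n : ℕ) (h : (A ^ n) v = 0) :
    ∑ k ∈ range n, (Nat.factorial k : ℂ)⁻¹ •
      (A ^ k) (∑ j ∈ range n, (Nat.factorial j : ℂ)⁻¹ • ((-A) ^ j) v) = v := by
  set g : ℕ × ℕ → V := fun p =>
    ((Nat.factorial p.1 : ℂ)⁻¹ * (Nat.factorial p.2 : ℂ)⁻¹ * (-1 : ℂ) ^ p.2) •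
      (A ^ (p.1 + p.2)) v with hg
  have step1 : ∑ k ∈ range n, (Nat.factorial k : ℂ)⁻¹ •
      (A ^ k) (∑ j ∈ range n, (Nat.factorial j : ℂ)⁻¹ • ((-A) ^ j) v)
      = ∑ p ∈ range n ×ˢ range n, g p := by
    rw [Finset.sum_product]
    refine Finset.sum_congr rfl fun k _ => ?_
    rw [map_sum, Finset.smul_sum]
    refine Finset.sum_congr rfl fun j _ => ?_
    show _ = ((Nat.factorial k : ℂ)⁻¹ * (Nat.factorial j : ℂ)⁻¹ * (-1 : ℂ) ^ j) • (A ^ (k + j)) v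
    rw [neg_pow_apply, map_smul, map_smul, smul_smul, smul_smul, ← Module.End.mul_apply, ← pow_add,
      mul_assoc]
  have step2 : ∑ p ∈ range n ×ˢ range n, g p
      = ∑ p ∈ (range n ×ˢ range n).filter (fun p => p.1 + p.2 < n), g p := by
    refine (Finset.sum_filter_of_ne fun p _ hne => ?_).symm
    by_contra hc
    refine hne ?_
    show ((Nat.factorial p.1 : ℂ)⁻¹ * (Nat.factorial p.2 : ℂ)⁻¹ * (-1 : ℂ) ^ p.2) •
      (A ^ (p.1 + p.2)) v = 0
    rw [pow_apply_zero_mono A h (le_of_not_gt hc), smul_zero]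
  have step3 := sum_antidiag_core g n
  rw [step1, step2, ← step3]
  have step4 : ∀ m ∈ range n, ∑ p ∈ Finset.HasAntidiagonal.antidiagonal m, g p
      = (if m = 0 then (1 : ℂ) else 0) • (A ^ m) v := by
    intro m _
    rw [← alt_inv_factorial_sum m, Finset.sum_smul]
    refine Finset.sum_congr rfl fun p hp => ?_
    rw [Finset.HasAntidiagonal.mem_antidiagonal] at hp
    show ((Nat.factorial p.1 : ℂ)⁻¹ * (Nat.factorial p.2 : ℂ)⁻¹ * (-1 : ℂ) ^ p.2) •
      (A ^ (p.1 + p.2)) v = _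
    rw [hp]
  rw [Finset.sum_congr rfl step4]
  rcases Nat.eq_zero_or_pos n with hn | hn
  · subst hn
    simpa using h.symm
  · rw [Finset.sum_eq_single 0]
    · simp
    · intro m _ hm; simp [hm]
    · intro hmem; exact absurd (mem_range.mpr hn) hmem

/-- Leibniz rule for powers composed with another endomorphism. -/
lemma leibniz_pow_mul (A B : Module.End ℂ V) (m : ℕ) :
    A ^ m * B = ∑ p ∈ Finset.HasAntidiagonal.antidiagonal m, m.choose p.1 •
      ((((LinearMap.mulLeft ℂ A - LinearMap.mulRight ℂ A) ^ p.1) B) * A ^ p.2) := by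
  set D : Module.End ℂ (Module.End ℂ V) := LinearMap.mulLeft ℂ A - LinearMap.mulRight ℂ A with hD
  have hc : Commute D (LinearMap.mulRight ℂ A) :=
    ((LinearMap.commute_mulLeft_right A A)).sub_left (Commute.refl _)
  have hX : LinearMap.mulLeft ℂ A = D + LinearMap.mulRight ℂ A := by rw [hD]; abel
  have h1 : A ^ m * B = ((LinearMap.mulLeft ℂ A) ^ m) B := by
    rw [LinearMap.pow_mulLeft, LinearMap.mulLeft_apply]
  rw [h1, hX, hc.add_pow', LinearMap.sum_apply]
  refine Finset.sum_congr rfl fun p hp => ?_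
  rw [LinearMap.smul_apply]
  congr 1
  rw [(hc.pow_pow p.1 p.2).eq, Module.End.mul_apply, LinearMap.pow_mulRight,
    LinearMap.mulRight_apply]

end ExpProd

end Aux

attribute [local instance 100] LieRing.ofAssociativeRing




/-- **Exponentials of locally nilpotent elements give module isomorphisms.**
Let `ρ : L → End(V)` be a representation of a complex Lie algebra `L` on a complex
vector space `V`, and let `x ∈ L` be such that `ad x` is locally nilpotent on `L` and
`ρ(x)` is locally nilpotent on `V`.  Let `E : V → V` be defined by
`E v = Σ_{k<n} (1/k!) ρ(x)^k v` (for any `n` with `ρ(x)^n v = 0`), and let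
`e : L → L` be defined by `e y = Σ_{k<n} (1/k!) (ad x)^k y` (for any `n` with
`(ad x)^n y = 0`).  Then `E` is a bijective `ℂ`-linear map and
`E (ρ(y) v) = ρ(e y) (E v)` for all `y ∈ L`, `v ∈ V`; that is, `E` is an isomorphism
from `(V, ρ)` to `(V, ρ ∘ exp(ad x))`. -/
theorem exp_locally_nilpotent_module_iso
    {L V : Type*} [LieRing L] [LieAlgebra ℂ L]
    [AddCommGroup V] [Module ℂ V]
    (ρ : L →ₗ⁅ℂ⁆ Module.End ℂ V) (x : L)
    (had : ∀ y : L, ∃ n : ℕ, ((LieAlgebra.ad ℂ L x) ^ n) y = 0)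
    (hρ : ∀ v : V, ∃ n : ℕ, ((ρ x) ^ n) v = 0)
    (E : V → V)
    (hE : ∀ (v : V) (n : ℕ), ((ρ x) ^ n) v = 0 →
      E v = ∑ k ∈ Finset.range n, ((Nat.factorial k : ℂ))⁻¹ • ((ρ x) ^ k) v)
    (e : L → L)
    (he : ∀ (y : L) (n : ℕ), ((LieAlgebra.ad ℂ L x) ^ n) y = 0 →
      e y = ∑ k ∈ Finset.range n, ((Nat.factorial k : ℂ))⁻¹ • ((LieAlgebra.ad ℂ L x) ^ k) y) :
    Function.Bijective E ∧
      (∀ (c : ℂ) (u v : V), E (c • u + v) = c • E u + E v) ∧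
      (∀ (y : L) (v : V), E ((ρ y) v) = (ρ (e y)) (E v)) := by
  classical
  set A : Module.End ℂ V := ρ x with hA
  set D : Module.End ℂ (Module.End ℂ V) :=
    LinearMap.mulLeft ℂ A - LinearMap.mulRight ℂ A with hD
  -- linearity
  have hlin : ∀ (c : ℂ) (u v : V), E (c • u + v) = c • E u + E v := by
    intro c u v
    obtain ⟨nu, hu⟩ := hρ u
    obtain ⟨nv, hv⟩ := hρ v
    have hu' : (A ^ (max nu nv)) u = 0 := pow_apply_zero_mono A hu (le_max_left _ _)
    have hv' : (A ^ (max nu nv)) v = 0 := pow_apply_zero_mono A hv (le_max_right _ _)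
    have hw : (A ^ (max nu nv)) (c • u + v) = 0 := by
      rw [map_add, map_smul, hu', hv', smul_zero, add_zero]
    rw [hE _ _ hw, hE _ _ hu', hE _ _ hv', Finset.smul_sum, ← Finset.sum_add_distrib]
    refine Finset.sum_congr rfl fun k _ => ?_
    rw [map_add, map_smul, smul_add, smul_comm]
  -- inverse
  set F : V → V := fun v =>
    ∑ k ∈ range (hρ v).choose, (Nat.factorial k : ℂ)⁻¹ • ((-A) ^ k) v with hF
  have hEF : ∀ v, E (F v) = v := by
    intro v
    have hmv : (A ^ (hρ v).choose) v = 0 := (hρ v).choose_spec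
    have hFv : F v = ∑ j ∈ range (hρ v).choose,
        (Nat.factorial j : ℂ)⁻¹ • ((-A) ^ j) v := rfl
    have hAFv : (A ^ (hρ v).choose) (F v) = 0 := by
      rw [hFv, map_sum]
      refine Finset.sum_eq_zero fun j _ => ?_
      rw [map_smul, neg_pow_apply, map_smul, ← Module.End.mul_apply, ← pow_add,
        pow_apply_zero_mono A hmv (Nat.le_add_right _ j), smul_zero, smul_zero]
    rw [hE _ _ hAFv, hFv]
    exact exp_mul_exp_neg_apply A v _ hmv
  have hFE : ∀ v, F (E v) = v := by
    intro v
    obtain ⟨n, hn⟩ := hρ v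
    have hmE : (A ^ (hρ (E v)).choose) (E v) = 0 := (hρ (E v)).choose_spec
    have h1 : ((-A) ^ (hρ (E v)).choose) (E v) = 0 := by
      rw [neg_pow_apply, hmE, smul_zero]
    have h2 : F (E v) = ∑ k ∈ range (max (hρ (E v)).choose n),
        (Nat.factorial k : ℂ)⁻¹ • ((-A) ^ k) (E v) :=
      (sum_stable (-A) _ (E v) h1 (le_max_left _ _)).symm
    rw [h2]
    set N := max (hρ (E v)).choose n with hN
    have hnN : (A ^ N) v = 0 := pow_apply_zero_mono A hn (le_max_right _ _)
    have hneg : ((-A) ^ N) v = 0 := by rw [neg_pow_apply, hnN, smul_zero]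
    rw [hE v N hnN]
    have h3 := exp_mul_exp_neg_apply (-A) v N hneg
    rw [neg_neg] at h3
    exact h3
  refine ⟨Function.bijective_iff_has_inverse.mpr ⟨F, hFE, hEF⟩, hlin, ?_⟩
  -- intertwining
  have hDB : ∀ (z : L) (k : ℕ),
      (D ^ k) (ρ z) = ρ (((LieAlgebra.ad ℂ L x) ^ k) z) := by
    intro z k
    induction k with
    | zero => simp
    | succ k ih =>
      rw [pow_succ', pow_succ', Module.End.mul_apply, Module.End.mul_apply, ih, hD,
        LinearMap.sub_apply, LinearMap.mulLeft_apply, LinearMap.mulRight_apply,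
        LieAlgebra.ad_apply, LieHom.map_lie, Ring.lie_def]
  intro y v
  obtain ⟨n, hn⟩ := had y
  obtain ⟨P, hP⟩ := hρ v
  set g : ℕ × ℕ → V := fun p =>
    ((Nat.factorial p.1 : ℂ)⁻¹ * (Nat.factorial p.2 : ℂ)⁻¹) •
      ((D ^ p.1) (ρ y)) ((A ^ p.2) v) with hg
  have hgzero1 : ∀ p : ℕ × ℕ, n ≤ p.1 → g p = 0 := by
    intro p hp
    show ((Nat.factorial p.1 : ℂ)⁻¹ * (Nat.factorial p.2 : ℂ)⁻¹) •
      ((D ^ p.1) (ρ y)) ((A ^ p.2) v) = 0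
    rw [hDB, pow_apply_zero_mono (LieAlgebra.ad ℂ L x) hn hp, map_zero,
      LinearMap.zero_apply, smul_zero]
  have hgzero2 : ∀ p : ℕ × ℕ, P ≤ p.2 → g p = 0 := by
    intro p hp
    show ((Nat.factorial p.1 : ℂ)⁻¹ * (Nat.factorial p.2 : ℂ)⁻¹) •
      ((D ^ p.1) (ρ y)) ((A ^ p.2) v) = 0
    rw [pow_apply_zero_mono A hP hp, map_zero, smul_zero]
  have hAM : (A ^ (n + P)) ((ρ y) v) = 0 := by
    rw [← Module.End.mul_apply, leibniz_pow_mul, ← hD, LinearMap.sum_apply]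
    refine Finset.sum_eq_zero fun p hp => ?_
    rw [Finset.HasAntidiagonal.mem_antidiagonal] at hp
    rw [LinearMap.smul_apply, Module.End.mul_apply]
    rcases le_or_gt n p.1 with h | h
    · rw [hDB, pow_apply_zero_mono (LieAlgebra.ad ℂ L x) hn h, map_zero,
        LinearMap.zero_apply, smul_zero]
    · have hP2 : P ≤ p.2 := by omega
      rw [pow_apply_zero_mono A hP hP2, map_zero, smul_zero]
  have hL : E ((ρ y) v) = ∑ m ∈ range (n + P), ∑ p ∈ Finset.HasAntidiagonal.antidiagonal m, g p := by
    rw [hE _ _ hAM]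
    refine Finset.sum_congr rfl fun m _ => ?_
    rw [show (A ^ m) ((ρ y) v) = ((A ^ m) * (ρ y)) v from rfl,
      leibniz_pow_mul, ← hD, LinearMap.sum_apply, Finset.smul_sum]
    refine Finset.sum_congr rfl fun p hp => ?_
    rw [Finset.HasAntidiagonal.mem_antidiagonal] at hp
    rw [LinearMap.smul_apply, Module.End.mul_apply]
    show _ = ((Nat.factorial p.1 : ℂ)⁻¹ * (Nat.factorial p.2 : ℂ)⁻¹) •
      ((D ^ p.1) (ρ y)) ((A ^ p.2) v)
    rw [← Nat.cast_smul_eq_nsmul ℂ, smul_smul]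
    congr 1
    have h1 : p.1 ≤ m := by omega
    have h2 : m - p.1 = p.2 := by omega
    have hfac := Nat.choose_mul_factorial_mul_factorial h1
    rw [h2] at hfac
    have hfacC : ((m.choose p.1 : ℂ)) * (Nat.factorial p.1 : ℂ) * (Nat.factorial p.2 : ℂ)
        = (Nat.factorial m : ℂ) := by exact_mod_cast congrArg (Nat.cast (R := ℂ)) hfac
    have hp1 : (Nat.factorial p.1 : ℂ) ≠ 0 := Nat.cast_ne_zero.mpr (Nat.factorial_ne_zero _)
    have hp2 : (Nat.factorial p.2 : ℂ) ≠ 0 := Nat.cast_ne_zero.mpr (Nat.factorial_ne_zero _)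
    have hm : (Nat.factorial m : ℂ) ≠ 0 := Nat.cast_ne_zero.mpr (Nat.factorial_ne_zero _)
    field_simp
    rw [← hfacC]
  have hR : (ρ (e y)) (E v) = ∑ k ∈ range n, ∑ j ∈ range P, g (k, j) := by
    rw [he y n hn, hE v P hP]
    have hρsum : ρ (∑ k ∈ range n, (Nat.factorial k : ℂ)⁻¹ • ((LieAlgebra.ad ℂ L x) ^ k) y)
        = ∑ k ∈ range n, (Nat.factorial k : ℂ)⁻¹ • (D ^ k) (ρ y) := by
      rw [← LieHom.coe_toLinearMap, map_sum]
      refine Finset.sum_congr rfl fun k _ => ?_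
      simp only [map_smul, LieHom.coe_toLinearMap]
      rw [hDB]
    rw [hρsum, LinearMap.sum_apply]
    refine Finset.sum_congr rfl fun k _ => ?_
    rw [LinearMap.smul_apply, map_sum, Finset.smul_sum]
    refine Finset.sum_congr rfl fun j _ => ?_
    rw [map_smul, smul_smul]
  rw [hL, hR, sum_antidiag_core g (n + P), ← Finset.sum_product]
  refine (Finset.sum_subset ?_ ?_).symm
  · intro p hp
    rw [Finset.mem_product, mem_range, mem_range] at hp
    rw [Finset.mem_filter, Finset.mem_product, mem_range, mem_range]
    omega
  · intro p hp hnp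
    rw [Finset.mem_filter, Finset.mem_product, mem_range, mem_range] at hp
    rw [Finset.mem_product, mem_range, mem_range] at hnp
    rcases not_and_or.mp hnp with h | h
    · exact hgzero1 p (le_of_not_gt h)
    · exact hgzero2 p (le_of_not_gt h)
end

section
/- Let G be an abelian group and let A = ⊕_{g∈G} A_g and B = ⊕_{g∈G} B_g be associative unital ℂ-algebras graded by G (so A_g A_h ⊆ A_{g+h} and 1 ∈ A_0, and similarly for B). Let V = ⊕_{γ∈G} V_γ be a G-graded A-module (A_g V_γ ⊆ V_{g+γ}) and W = ⊕_{γ∈G} W_γ a G-graded B-module, and assume V and W are G-graded-simple, i.e. nonzero and with no graded submodules other than 0 and the whole module. Assume moreover that each homogeneous component V_γ is finite-dimensional over ℂ, and that for every α ∈ G with α ≠ 0 there is no A-module isomorphism φ : V → V with φ(V_γ) = V_{γ+α} for all γ ∈ G (i.e. V admits no grading-preserving isomorphism onto its grading shift V^(α)). Then the A ⊗ B-module V ⊗ W, with grading (V ⊗ W)_γ = ⊕_{α+β=γ} V_α ⊗ W_β, is G-graded-simple. -/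
open scoped TensorProduct

set_option linter.unusedSectionVars false
set_option maxHeartbeats 1000000

section proj
variable {G : Type*} [DecidableEq G] {V : Type*} [AddCommGroup V] [Module ℂ V]
  (𝒱 : G → Submodule ℂ V)

noncomputable def gradProj (h : DirectSum.IsInternal 𝒱) (γ : G) : V →ₗ[ℂ] V :=
  (𝒱 γ).subtype ∘ₗ (DirectSum.component ℂ G (fun i => 𝒱 i) γ) ∘ₗ
    (LinearEquiv.ofBijective (DirectSum.coeLinearMap 𝒱) h).symm.toLinearMap

lemma gradProj_apply (h : DirectSum.IsInternal 𝒱) (γ : G) (x : V) :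
    gradProj 𝒱 h γ x
      = ((LinearEquiv.ofBijective (DirectSum.coeLinearMap 𝒱) h).symm x γ : V) := rfl

lemma gradProj_mem (h : DirectSum.IsInternal 𝒱) (γ : G) (x : V) :
    gradProj 𝒱 h γ x ∈ 𝒱 γ := by simp [gradProj]

lemma gradProj_of_mem (h : DirectSum.IsInternal 𝒱) {δ : G} {x : V} (hx : x ∈ 𝒱 δ) :
    gradProj 𝒱 h δ x = x := by
  rw [gradProj_apply, h.ofBijective_coeLinearMap_of_mem hx]

lemma gradProj_of_mem_ne (h : DirectSum.IsInternal 𝒱) {δ γ : G} (hne : γ ≠ δ) {x : V}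
    (hx : x ∈ 𝒱 δ) : gradProj 𝒱 h γ x = 0 := by
  rw [gradProj_apply, h.ofBijective_coeLinearMap_of_mem_ne (Ne.symm hne) hx]
  rfl

lemma gradProj_support (h : DirectSum.IsInternal 𝒱) (x : V) :
    ∃ s : Finset G, (∀ γ ∉ s, gradProj 𝒱 h γ x = 0) ∧ ∑ γ ∈ s, gradProj 𝒱 h γ x = x := by
  classical
  set e := LinearEquiv.ofBijective (DirectSum.coeLinearMap 𝒱) h with he
  set d := e.symm x with hd
  refine ⟨d.support, ?_, ?_⟩
  · intro γ hγ
    have h0 : d γ = 0 := DFinsupp.notMem_support_iff.mp hγ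
    rw [gradProj_apply, ← he, ← hd, h0, Submodule.coe_zero]
  · have hsum := DirectSum.sum_support_of d
    calc ∑ γ ∈ d.support, gradProj 𝒱 h γ x
        = ∑ γ ∈ d.support, (d γ : V) := by
          refine Finset.sum_congr rfl fun γ _ => ?_
          rw [gradProj_apply, ← he, ← hd]
      _ = e d := by
          conv_rhs => rw [← hsum]
          rw [map_sum]
          refine Finset.sum_congr rfl fun γ _ => ?_
          rw [he]
          exact (DirectSum.coeLinearMap_of 𝒱 γ (d γ)).symm
      _ = x := by rw [hd, LinearEquiv.apply_symm_apply]

end proj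

section gradedA
variable {G : Type*} [AddCommGroup G] [DecidableEq G]
  {A V : Type*} [Ring A] [Algebra ℂ A]
  [AddCommGroup V] [Module ℂ V] [Module A V] [IsScalarTower ℂ A V]
  (𝒱 : G → Submodule ℂ V) (h𝒱 : DirectSum.IsInternal 𝒱)

lemma aux_proj_comm (σ : G) (φ : V →ₗ[A] V)
    (hφ : ∀ δ : G, ∀ x ∈ 𝒱 δ, φ x ∈ 𝒱 (δ + σ)) (x : V) (δ : G) :
    gradProj 𝒱 h𝒱 (δ + σ) (φ x) = φ (gradProj 𝒱 h𝒱 δ x) := by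
  classical
  obtain ⟨s, h0, hsum⟩ := gradProj_support 𝒱 h𝒱 x
  have hφx : φ x = ∑ δ' ∈ s, φ (gradProj 𝒱 h𝒱 δ' x) := by
    rw [← map_sum, hsum]
  rw [hφx, map_sum]
  by_cases hδ : δ ∈ s
  · rw [Finset.sum_eq_single_of_mem δ hδ]
    · exact gradProj_of_mem 𝒱 h𝒱 (hφ δ _ (gradProj_mem 𝒱 h𝒱 δ x))
    · intro δ' _ hne
      exact gradProj_of_mem_ne 𝒱 h𝒱 (fun hc => hne (add_right_cancel hc).symm)
        (hφ δ' _ (gradProj_mem 𝒱 h𝒱 δ' x))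
  · rw [Finset.sum_eq_zero, h0 δ hδ, map_zero]
    intro δ' hδ'
    have hne : δ' ≠ δ := by rintro rfl; exact hδ hδ'
    exact gradProj_of_mem_ne 𝒱 h𝒱 (fun hc => hne (add_right_cancel hc).symm)
      (hφ δ' _ (gradProj_mem 𝒱 h𝒱 δ' x))

lemma graded_of_proj (K : Submodule A V)
    (hK : ∀ x ∈ K, ∀ δ : G, gradProj 𝒱 h𝒱 δ x ∈ K) :
    K.restrictScalars ℂ = ⨆ γ : G, (K.restrictScalars ℂ ⊓ 𝒱 γ) := by
  refine le_antisymm ?_ (iSup_le fun γ => inf_le_left)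
  intro x hx
  obtain ⟨s, h0, hsum⟩ := gradProj_support 𝒱 h𝒱 x
  rw [← hsum]
  exact sum_mem fun δ _ => Submodule.mem_iSup_of_mem δ
    ⟨hK x hx δ, gradProj_mem 𝒱 h𝒱 δ x⟩

include h𝒱 in
lemma ker_graded (σ : G) (φ : V →ₗ[A] V)
    (hφ : ∀ δ : G, ∀ x ∈ 𝒱 δ, φ x ∈ 𝒱 (δ + σ)) :
    (LinearMap.ker φ).restrictScalars ℂ
      = ⨆ γ : G, ((LinearMap.ker φ).restrictScalars ℂ ⊓ 𝒱 γ) := by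
  refine graded_of_proj 𝒱 h𝒱 _ fun x hx δ => ?_
  have hx0 : φ x = 0 := hx
  simp only [LinearMap.mem_ker]
  rw [← aux_proj_comm 𝒱 h𝒱 σ φ hφ, hx0, map_zero]

include h𝒱 in
lemma range_graded (σ : G) (φ : V →ₗ[A] V)
    (hφ : ∀ δ : G, ∀ x ∈ 𝒱 δ, φ x ∈ 𝒱 (δ + σ)) :
    (LinearMap.range φ).restrictScalars ℂ
      = ⨆ γ : G, ((LinearMap.range φ).restrictScalars ℂ ⊓ 𝒱 γ) := by
  refine graded_of_proj 𝒱 h𝒱 _ ?_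
  rintro x ⟨y, rfl⟩ δ
  refine ⟨gradProj 𝒱 h𝒱 (δ - σ) y, ?_⟩
  have : gradProj 𝒱 h𝒱 ((δ - σ) + σ) (φ y) = φ (gradProj 𝒱 h𝒱 (δ - σ) y) :=
    aux_proj_comm 𝒱 h𝒱 σ φ hφ y (δ - σ)
  rw [sub_add_cancel] at this
  exact this.symm

include h𝒱 in
lemma image_eq (σ : G) (φ : V →ₗ[A] V)
    (hφ : ∀ δ : G, ∀ x ∈ 𝒱 δ, φ x ∈ 𝒱 (δ + σ))
    (hsurj : LinearMap.range φ = ⊤) (δ : G) :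
    ⇑φ '' ((𝒱 δ : Set V)) = (𝒱 (δ + σ) : Set V) := by
  refine Set.Subset.antisymm ?_ ?_
  · rintro _ ⟨x, hx, rfl⟩; exact hφ δ x hx
  · intro y hy
    obtain ⟨x, rfl⟩ := LinearMap.range_eq_top.mp hsurj y
    refine ⟨gradProj 𝒱 h𝒱 δ x, gradProj_mem 𝒱 h𝒱 δ x, ?_⟩
    rw [← aux_proj_comm 𝒱 h𝒱 σ φ hφ, gradProj_of_mem 𝒱 h𝒱 hy]

end gradedA


section dual
variable {W : Type*} [AddCommGroup W] [Module ℂ W]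

lemma exists_dual_family {k : ℕ} {ω : Fin k → W} (hω : LinearIndependent ℂ ω) :
    ∃ f : Fin k → (W →ₗ[ℂ] ℂ), ∀ j i, f j (ω i) = if i = j then 1 else 0 := by
  classical
  set T : (Fin k → ℂ) →ₗ[ℂ] W :=
    LinearMap.lsum ℂ (fun _ : Fin k => ℂ) ℕ fun i => LinearMap.id.smulRight (ω i) with hT
  have hker : LinearMap.ker T = ⊥ := Fintype.linearIndependent_iff'.mp hω
  obtain ⟨L, hL⟩ := T.exists_leftInverse_of_injective hker
  refine ⟨fun j => LinearMap.proj j ∘ₗ L, fun j i => ?_⟩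
  have hTi : T (Pi.single i 1) = ω i := by
    simp [hT, LinearMap.lsum_apply, Pi.single_apply, Finset.sum_ite_eq]
  have : L (T (Pi.single i 1)) = Pi.single i 1 := by
    rw [← LinearMap.comp_apply, hL]; rfl
  simp only [LinearMap.comp_apply, hTi] at this ⊢
  rw [this]
  simp [LinearMap.proj, Pi.single_apply, eq_comm]

variable {V : Type*} [AddCommGroup V] [Module ℂ V]

/-- contraction with a functional -/
noncomputable def contr (f : W →ₗ[ℂ] ℂ) : V ⊗[ℂ] W →ₗ[ℂ] V :=
  (TensorProduct.rid ℂ V).toLinearMap ∘ₗ TensorProduct.map LinearMap.id f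

@[simp] lemma contr_tmul (f : W →ₗ[ℂ] ℂ) (x : V) (y : W) :
    contr f (x ⊗ₜ[ℂ] y) = f y • x := by
  simp [contr]

lemma eq_zero_of_sum_tmul_eq_zero {k : ℕ} {ω : Fin k → W} (hω : LinearIndependent ℂ ω)
    (y : Fin k → V) (hsum : ∑ i, y i ⊗ₜ[ℂ] ω i = 0) : ∀ i, y i = 0 := by
  classical
  obtain ⟨f, hf⟩ := exists_dual_family hω
  intro j
  have := congrArg (contr (f j)) hsum
  rw [map_sum, map_zero] at this
  simpa [hf, Finset.sum_ite_eq'] using this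

lemma tmul_ne_zero {x : V} {y : W} (hx : x ≠ 0) (hy : y ≠ 0) : x ⊗ₜ[ℂ] y ≠ 0 := by
  have hiy : LinearIndependent ℂ (fun _ : Fin 1 => y) :=
    linearIndependent_unique_iff.mpr hy
  intro h0
  have := eq_zero_of_sum_tmul_eq_zero hiy (fun _ => x) (by simpa using h0) 0
  exact hx this

end dual

section theta
variable {G : Type*} [AddCommGroup G] [DecidableEq G]
  {V W : Type*} [AddCommGroup V] [Module ℂ V] [AddCommGroup W] [Module ℂ W]
  (𝒱 : G → Submodule ℂ V) (𝒲 : G → Submodule ℂ W)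
  (h𝒱 : DirectSum.IsInternal 𝒱) (h𝒲 : DirectSum.IsInternal 𝒲)

noncomputable def thetaP (p : G × G) : V ⊗[ℂ] W →ₗ[ℂ] V ⊗[ℂ] W :=
  TensorProduct.map (gradProj 𝒱 h𝒱 p.1) (gradProj 𝒲 h𝒲 p.2)

/-- the degree-`γ` piece of the tensor grading -/
noncomputable def TT (γ : G) : Submodule ℂ (V ⊗[ℂ] W) :=
  ⨆ (p : G × G) (_ : p.1 + p.2 = γ),
    LinearMap.range (TensorProduct.map (𝒱 p.1).subtype (𝒲 p.2).subtype)

lemma thetaP_support (u : V ⊗[ℂ] W) :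
    ∃ S : Finset (G × G), (∀ p ∉ S, thetaP 𝒱 𝒲 h𝒱 h𝒲 p u = 0) ∧
      ∑ p ∈ S, thetaP 𝒱 𝒲 h𝒱 h𝒲 p u = u := by
  classical
  induction u using TensorProduct.induction_on with
  | zero => exact ⟨∅, fun p _ => map_zero _, by simp⟩
  | tmul x y =>
    obtain ⟨sx, hx0, hxs⟩ := gradProj_support 𝒱 h𝒱 x
    obtain ⟨sy, hy0, hys⟩ := gradProj_support 𝒲 h𝒲 y
    refine ⟨sx ×ˢ sy, ?_, ?_⟩
    · intro p hp
      rw [Finset.mem_product, not_and_or] at hp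
      rcases hp with hp | hp
      · simp [thetaP, hx0 _ hp]
      · simp [thetaP, hy0 _ hp]
    · simp only [thetaP, TensorProduct.map_tmul, Finset.sum_product]
      conv_rhs => rw [← hxs, TensorProduct.sum_tmul]
      refine Finset.sum_congr rfl fun α _ => ?_
      conv_rhs => rw [← hys, TensorProduct.tmul_sum]
  | add u v hu hv =>
    obtain ⟨S, hS0, hSs⟩ := hu
    obtain ⟨T, hT0, hTs⟩ := hv
    refine ⟨S ∪ T, fun p hp => ?_, ?_⟩
    · rw [Finset.mem_union, not_or] at hp
      rw [map_add, hS0 _ hp.1, hT0 _ hp.2, add_zero]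
    · simp only [map_add, Finset.sum_add_distrib]
      rw [← Finset.sum_subset Finset.subset_union_left (fun p _ hp => hS0 p hp),
        ← Finset.sum_subset Finset.subset_union_right (fun p _ hp => hT0 p hp), hSs, hTs]

lemma thetaP_eq_zero_of_mem {γ : G} {u : V ⊗[ℂ] W} (hu : u ∈ TT 𝒱 𝒲 γ) {p : G × G}
    (hp : p.1 + p.2 ≠ γ) : thetaP 𝒱 𝒲 h𝒱 h𝒲 p u = 0 := by
  classical
  revert u
  suffices h : TT 𝒱 𝒲 γ ≤ LinearMap.ker (thetaP 𝒱 𝒲 h𝒱 h𝒲 p) by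
    intro u hu; exact h hu
  refine iSup₂_le fun q hq => ?_
  rintro u ⟨m, rfl⟩
  simp only [LinearMap.mem_ker]
  induction m using TensorProduct.induction_on with
  | zero => simp
  | tmul x y =>
    simp only [TensorProduct.map_tmul, thetaP, Submodule.subtype_apply]
    rcases ne_or_eq p.1 q.1 with h1 | h1
    · rw [gradProj_of_mem_ne 𝒱 h𝒱 h1 x.2, TensorProduct.zero_tmul]
    · have h2 : p.2 ≠ q.2 := by
        intro h2; exact hp (by rw [h1, h2, hq])
      rw [gradProj_of_mem_ne 𝒲 h𝒲 h2 y.2, TensorProduct.tmul_zero]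
  | add u v hu hv => rw [map_add, map_add, hu, hv, add_zero]

end theta

section keyP
variable {G : Type*} [AddCommGroup G] [DecidableEq G]
  {V W : Type*} [AddCommGroup V] [Module ℂ V] [AddCommGroup W] [Module ℂ W]
  (𝒱 : G → Submodule ℂ V) (𝒲 : G → Submodule ℂ W)
  (h𝒱 : DirectSum.IsInternal 𝒱) (h𝒲 : DirectSum.IsInternal 𝒲)

include h𝒲 in
lemma keyP {P : Submodule ℂ (V ⊗[ℂ] W)}
    (hP : P = ⨆ γ : G, (P ⊓ TT 𝒱 𝒲 γ))
    {k : ℕ} {y : Fin k → V} {ω : Fin k → W} {β : Fin k → G}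
    (hω : ∀ i, ω i ∈ 𝒲 (β i))
    (hmem : (∑ i, y i ⊗ₜ[ℂ] ω i) ∈ P) (δ : G) :
    ∑ i, gradProj 𝒱 h𝒱 (δ - β i) (y i) ⊗ₜ[ℂ] ω i ∈ P := by
  classical
  set s : V ⊗[ℂ] W := ∑ i, y i ⊗ₜ[ℂ] ω i with hs
  have hmem' : s ∈ ⨆ γ : G, (P ⊓ TT 𝒱 𝒲 γ) := hP ▸ hmem
  obtain ⟨f, hf, hfsum⟩ := (Submodule.mem_iSup_iff_exists_finsupp _ _).mp hmem'
  have hfP : ∀ γ, f γ ∈ P := fun γ => ((hf γ).1 : _)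
  have hfT : ∀ γ, f γ ∈ TT 𝒱 𝒲 γ := fun γ => ((hf γ).2 : _)
  -- support finsets for each f γ
  choose Sf hSf0 hSfs using fun γ => thetaP_support 𝒱 𝒲 h𝒱 h𝒲 (f γ)
  set T : Finset (G × G) :=
    f.support.biUnion Sf ∪ Finset.image (fun i : Fin k => (δ - β i, β i)) Finset.univ with hT
  set F : Finset (G × G) := T.filter (fun p => p.1 + p.2 = δ) with hF
  have hFdeg : ∀ p ∈ F, p.1 + p.2 = δ := fun p hp => (Finset.mem_filter.mp hp).2
  -- Claim A
  have claimA : ∑ p ∈ F, thetaP 𝒱 𝒲 h𝒱 h𝒲 p s = f δ := by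
    have hs' : s = ∑ γ ∈ f.support, f γ := by
      rw [← hfsum]; rfl
    calc ∑ p ∈ F, thetaP 𝒱 𝒲 h𝒱 h𝒲 p s
        = ∑ γ ∈ f.support, ∑ p ∈ F, thetaP 𝒱 𝒲 h𝒱 h𝒲 p (f γ) := by
          rw [hs']
          simp only [map_sum]
          exact Finset.sum_comm
      _ = f δ := by
          by_cases hδ : δ ∈ f.support
          · rw [Finset.sum_eq_single δ]
            · -- ∑_{p ∈ F} Θ p (f δ) = f δ
              have h1 : ∑ p ∈ F ∪ Sf δ, thetaP 𝒱 𝒲 h𝒱 h𝒲 p (f δ) = f δ := by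
                rw [← Finset.sum_subset Finset.subset_union_right
                  (fun p _ hp => hSf0 δ p hp), hSfs]
              have h2 : ∑ p ∈ F ∪ Sf δ, thetaP 𝒱 𝒲 h𝒱 h𝒲 p (f δ)
                  = ∑ p ∈ F, thetaP 𝒱 𝒲 h𝒱 h𝒲 p (f δ) := by
                symm
                refine Finset.sum_subset Finset.subset_union_left fun p hpu hp => ?_
                refine thetaP_eq_zero_of_mem 𝒱 𝒲 h𝒱 h𝒲 (hfT δ) ?_
                intro hdeg
                rcases Finset.mem_union.mp hpu with h | h
                · exact hp h
                · exact hp (Finset.mem_filter.mpr ⟨Finset.mem_union.mpr (Or.inl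
                    (Finset.mem_biUnion.mpr ⟨δ, hδ, h⟩)), hdeg⟩)
              rw [← h2, h1]
            · intro γ _ hγδ
              refine Finset.sum_eq_zero fun p hp => ?_
              exact thetaP_eq_zero_of_mem 𝒱 𝒲 h𝒱 h𝒲 (hfT γ) (by rw [hFdeg p hp]; exact (Ne.symm hγδ))
            · intro h; exact absurd hδ h
          · have h0 : f δ = 0 := Finsupp.notMem_support_iff.mp hδ
            rw [h0]
            refine Finset.sum_eq_zero fun γ hγ => ?_
            refine Finset.sum_eq_zero fun p hp => ?_
            have : γ ≠ δ := by rintro rfl; exact hδ hγ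
            exact thetaP_eq_zero_of_mem 𝒱 𝒲 h𝒱 h𝒲 (hfT γ) (by rw [hFdeg p hp]; exact (Ne.symm this))
  -- Claim B
  have claimB : ∑ p ∈ F, thetaP 𝒱 𝒲 h𝒱 h𝒲 p s
      = ∑ i, gradProj 𝒱 h𝒱 (δ - β i) (y i) ⊗ₜ[ℂ] ω i := by
    have : ∀ p ∈ F, ∀ i : Fin k,
        gradProj 𝒱 h𝒱 p.1 (y i) ⊗ₜ[ℂ] gradProj 𝒲 h𝒲 p.2 (ω i)
          = if p = (δ - β i, β i) then gradProj 𝒱 h𝒱 (δ - β i) (y i) ⊗ₜ[ℂ] ω i else 0 := by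
      intro p hp i
      by_cases h2 : p.2 = β i
      · have h1 : p.1 = δ - β i := by
          have := hFdeg p hp; rw [h2] at this
          exact eq_sub_of_add_eq this
        rw [if_pos (Prod.ext h1 h2), h1, h2, gradProj_of_mem 𝒲 h𝒲 (hω i)]
      · rw [if_neg (by intro h; exact h2 (by rw [h])), gradProj_of_mem_ne 𝒲 h𝒲 h2 (hω i),
          TensorProduct.tmul_zero]
    calc ∑ p ∈ F, thetaP 𝒱 𝒲 h𝒱 h𝒲 p s
        = ∑ i, ∑ p ∈ F, (if p = (δ - β i, β i)
            then gradProj 𝒱 h𝒱 (δ - β i) (y i) ⊗ₜ[ℂ] ω i else 0) := by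
          rw [hs]
          simp only [map_sum, thetaP, TensorProduct.map_tmul]
          rw [Finset.sum_comm]
          exact Finset.sum_congr rfl fun i _ => Finset.sum_congr rfl fun p hp => this p hp i
      _ = ∑ i, gradProj 𝒱 h𝒱 (δ - β i) (y i) ⊗ₜ[ℂ] ω i := by
          refine Finset.sum_congr rfl fun i _ => ?_
          rw [Finset.sum_ite_eq' F ((δ - β i, β i) : G × G)]
          rw [if_pos]
          refine Finset.mem_filter.mpr ⟨Finset.mem_union.mpr (Or.inr ?_), by simp⟩
          exact Finset.mem_image.mpr ⟨i, Finset.mem_univ i, rfl⟩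
  rw [← claimB, claimA]
  exact hfP δ

end keyP


section rep
variable {G : Type*} [AddCommGroup G] [DecidableEq G]
  {V W : Type*} [AddCommGroup V] [Module ℂ V] [AddCommGroup W] [Module ℂ W]
  (𝒱 : G → Submodule ℂ V) (𝒲 : G → Submodule ℂ W)

lemma TT_exists_rep {γ : G} {u : V ⊗[ℂ] W} (hu : u ∈ TT 𝒱 𝒲 γ) :
    ∃ (k : ℕ) (α : Fin k → G) (v : Fin k → V) (ω : Fin k → W),
      (∀ i, v i ∈ 𝒱 (α i)) ∧ (∀ i, ω i ∈ 𝒲 (γ - α i)) ∧ ∑ i, v i ⊗ₜ[ℂ] ω i = u := by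
  classical
  set s : Set (V ⊗[ℂ] W) :=
    {z | ∃ (a : G) (x : V) (yy : W), x ∈ 𝒱 a ∧ yy ∈ 𝒲 (γ - a) ∧ x ⊗ₜ[ℂ] yy = z} with hsdef
  have hle : TT 𝒱 𝒲 γ ≤ Submodule.span ℂ s := by
    refine iSup₂_le fun q hq => ?_
    rintro u ⟨m, rfl⟩
    induction m using TensorProduct.induction_on with
    | zero => simp
    | tmul x y =>
      refine Submodule.subset_span ?_
      refine ⟨q.1, x, y, x.2, ?_, by simp⟩
      have : (γ - q.1 : G) = q.2 := by rw [← hq]; abel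
      rw [this]; exact y.2
    | add m m' hm hm' => rw [map_add]; exact add_mem hm hm'
  obtain ⟨c, hsupp, hcsum⟩ := Submodule.mem_span_set.mp (hle hu)
  set k := c.support.card with hk
  set e : Fin k ≃ {z // z ∈ c.support} := c.support.equivFin.symm with he
  have hmem : ∀ j : Fin k, ((e j : V ⊗[ℂ] W)) ∈ s := fun j => hsupp (e j).2
  choose a x yy hx hyy hz using hmem
  refine ⟨k, a, fun j => c (e j : V ⊗[ℂ] W) • x j, yy, ?_, hyy, ?_⟩
  · exact fun j => Submodule.smul_mem _ _ (hx j)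
  · calc ∑ j, (c (e j : V ⊗[ℂ] W) • x j) ⊗ₜ[ℂ] yy j
        = ∑ j, c (e j : V ⊗[ℂ] W) • ((e j : V ⊗[ℂ] W)) := by
          refine Finset.sum_congr rfl fun j _ => ?_
          rw [← TensorProduct.smul_tmul', hz j]
      _ = ∑ z ∈ c.support.attach, c (z : V ⊗[ℂ] W) • (z : V ⊗[ℂ] W) := by
          exact Fintype.sum_equiv e _ _ (fun j => rfl)
      _ = ∑ z ∈ c.support, c z • z := Finset.sum_attach _ (fun z => c z • z)
      _ = u := by rw [← hcsum]; rfl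

end rep


/-- **Graded-simplicity of tensor products.**
Let `G` be an abelian group, `A = ⊕_g A_g` and `B = ⊕_g B_g` be `G`-graded associative
unital `ℂ`-algebras, `V = ⊕_γ V_γ` a `G`-graded-simple `A`-module and `W = ⊕_γ W_γ` a
`G`-graded-simple `B`-module.  Assume each `V_γ` is finite-dimensional and that for
every `α ≠ 0` there is no `A`-module isomorphism `φ : V → V` with `φ(V_γ) = V_{γ+α}`
for all `γ` (no grading-preserving isomorphism onto a grading shift).  Then the
`A ⊗ B`-module `V ⊗ W`, with grading `(V ⊗ W)_γ = ⊕_{α+β=γ} V_α ⊗ W_β`, is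
`G`-graded-simple.  (Here an `A ⊗ B`-submodule of `V ⊗[ℂ] W` is encoded as a
`ℂ`-subspace closed under all the operators `v ⊗ w ↦ (a • v) ⊗ (b • w)`.) -/
theorem gradedSimple_tensorProduct
    {G : Type*} [AddCommGroup G] [DecidableEq G]
    {A B V W : Type*}
    [Ring A] [Algebra ℂ A] [Ring B] [Algebra ℂ B]
    [AddCommGroup V] [Module ℂ V] [Module A V] [IsScalarTower ℂ A V] [SMulCommClass A ℂ V]
    [AddCommGroup W] [Module ℂ W] [Module B W] [IsScalarTower ℂ B W] [SMulCommClass B ℂ W]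
    (𝒜 : G → Submodule ℂ A) (ℬ : G → Submodule ℂ B)
    (𝒱 : G → Submodule ℂ V) (𝒲 : G → Submodule ℂ W)
    -- `A` is a `G`-graded algebra
    (h𝒜 : DirectSum.IsInternal 𝒜) (h𝒜one : (1 : A) ∈ 𝒜 0)
    (h𝒜mul : ∀ (g h : G), ∀ a ∈ 𝒜 g, ∀ a' ∈ 𝒜 h, a * a' ∈ 𝒜 (g + h))
    -- `B` is a `G`-graded algebra
    (hℬ : DirectSum.IsInternal ℬ) (hℬone : (1 : B) ∈ ℬ 0)
    (hℬmul : ∀ (g h : G), ∀ b ∈ ℬ g, ∀ b' ∈ ℬ h, b * b' ∈ ℬ (g + h))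
    -- `V` is a `G`-graded `A`-module, `W` a `G`-graded `B`-module
    (h𝒱 : DirectSum.IsInternal 𝒱)
    (h𝒱smul : ∀ (g γ : G), ∀ a ∈ 𝒜 g, ∀ v ∈ 𝒱 γ, a • v ∈ 𝒱 (g + γ))
    (h𝒲 : DirectSum.IsInternal 𝒲)
    (h𝒲smul : ∀ (g γ : G), ∀ b ∈ ℬ g, ∀ w ∈ 𝒲 γ, b • w ∈ 𝒲 (g + γ))
    -- each homogeneous component of `V` is finite-dimensional
    (hVfin : ∀ γ : G, FiniteDimensional ℂ (𝒱 γ))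
    -- `V` is `G`-graded-simple
    (hVne : ∃ v : V, v ≠ 0)
    (hVsimple : ∀ P : Submodule A V,
      (P.restrictScalars ℂ = ⨆ γ : G, (P.restrictScalars ℂ ⊓ 𝒱 γ)) → P = ⊥ ∨ P = ⊤)
    -- `W` is `G`-graded-simple
    (hWne : ∃ w : W, w ≠ 0)
    (hWsimple : ∀ Q : Submodule B W,
      (Q.restrictScalars ℂ = ⨆ γ : G, (Q.restrictScalars ℂ ⊓ 𝒲 γ)) → Q = ⊥ ∨ Q = ⊤)
    -- no grading-preserving isomorphism between `V` and a nontrivial grading shift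
    (hnoshift : ∀ α : G, α ≠ 0 →
      ¬ ∃ φ : V ≃ₗ[A] V, ∀ γ : G, ⇑φ '' (𝒱 γ : Set V) = (𝒱 (γ + α) : Set V)) :
    -- conclusion: `V ⊗ W` is `G`-graded-simple as an `A ⊗ B`-module
    (∃ t : V ⊗[ℂ] W, t ≠ 0) ∧
      ∀ P : Submodule ℂ (V ⊗[ℂ] W),
        (∀ (a : A) (b : B), ∀ t ∈ P,
          TensorProduct.map (DistribMulAction.toLinearMap ℂ V a)
            (DistribMulAction.toLinearMap ℂ W b) t ∈ P) →
        (P = ⨆ γ : G, (P ⊓ ⨆ (p : G × G) (_ : p.1 + p.2 = γ),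
          LinearMap.range (TensorProduct.map (𝒱 p.1).subtype (𝒲 p.2).subtype))) →
        P = ⊥ ∨ P = ⊤ := by

  classical
  obtain ⟨v0, hv0⟩ := hVne
  obtain ⟨w0, hw0⟩ := hWne
  refine ⟨⟨v0 ⊗ₜ[ℂ] w0, tmul_ne_zero hv0 hw0⟩, ?_⟩
  intro P hP1 hP2
  by_cases hPbot : P = ⊥
  · exact Or.inl hPbot
  right
  have hP2' : P = ⨆ γ : G, (P ⊓ TT 𝒱 𝒲 γ) := hP2
  -- closure of P under the action of homogeneous elements of A (with b = 1)
  have hact : ∀ (a : A) (k : ℕ) (u : Fin k → V) (ω : Fin k → W),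
      (∑ i, u i ⊗ₜ[ℂ] ω i) ∈ P → (∑ i, (a • u i) ⊗ₜ[ℂ] ω i) ∈ P := by
    intro a k u ω hu
    have h := hP1 a 1 _ hu
    rw [map_sum] at h
    have heq : ∀ i : Fin k,
        TensorProduct.map (DistribMulAction.toLinearMap ℂ V a)
          (DistribMulAction.toLinearMap ℂ W (1 : B)) (u i ⊗ₜ[ℂ] ω i)
        = (a • u i) ⊗ₜ[ℂ] ω i := by
      intro i
      rw [TensorProduct.map_tmul]
      exact congrArg₂ _ rfl (one_smul B (ω i))
    rwa [Finset.sum_congr rfl fun i _ => heq i] at h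
  -- the minimal length of a nonzero homogeneous representation in P
  set Rep : ℕ → Prop := fun k => ∃ (γ : G) (α : Fin k → G) (v : Fin k → V) (ω : Fin k → W),
    (∀ i, v i ∈ 𝒱 (α i)) ∧ (∀ i, ω i ∈ 𝒲 (γ - α i)) ∧
    (∑ i, v i ⊗ₜ[ℂ] ω i) ∈ P ∧ (∑ i, v i ⊗ₜ[ℂ] ω i) ≠ 0 with hRepDef
  have hex : ∃ k, Rep k := by
    obtain ⟨t, htP, htne⟩ := Submodule.exists_mem_ne_zero_of_ne_bot hPbot
    have ht' : t ∈ ⨆ γ : G, (P ⊓ TT 𝒱 𝒲 γ) := hP2' ▸ htP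
    obtain ⟨f, hf, hfsum⟩ := (Submodule.mem_iSup_iff_exists_finsupp _ _).mp ht'
    have : ∃ γ0, f γ0 ≠ 0 := by
      by_contra hcon
      push_neg at hcon
      apply htne
      rw [← hfsum, Finsupp.sum]
      exact Finset.sum_eq_zero fun γ _ => hcon γ
    obtain ⟨γ0, hγ0⟩ := this
    obtain ⟨k, α, v, ω, hv, hω, hsum⟩ := TT_exists_rep 𝒱 𝒲 ((hf γ0).2 : f γ0 ∈ TT 𝒱 𝒲 γ0)
    exact ⟨k, γ0, α, v, ω, hv, hω, hsum ▸ ((hf γ0).1 : f γ0 ∈ P), hsum ▸ hγ0⟩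
  have hpure : ∃ (a0 b0 : G) (x : V) (yy : W), x ∈ 𝒱 a0 ∧ yy ∈ 𝒲 b0 ∧
      x ⊗ₜ[ℂ] yy ∈ P ∧ x ⊗ₜ[ℂ] yy ≠ 0 := by
    obtain ⟨N, hNrep, hmin⟩ : ∃ N, Rep N ∧ ∀ m, m < N → ¬ Rep m :=
      ⟨Nat.find hex, Nat.find_spec hex, fun m hm => Nat.find_min hex hm⟩
    obtain ⟨γ, α, v, ω, hv, hω, hmemP, hne⟩ := hNrep
    have hN1 : N = 1 := by
      rcases Nat.lt_or_ge N 2 with hN2 | hN2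
      · interval_cases N
        · exfalso; apply hne; simp
        · rfl
      · -- the hard case : derive a contradiction
        exfalso
        obtain ⟨m, rfl⟩ : ∃ m, N = m + 1 := ⟨N - 1, by omega⟩
        -- Step 1 : ω is linearly independent
        have hωind : LinearIndependent ℂ ω := by
          by_contra hdep
          obtain ⟨g, hgsum, i₀, hgi₀⟩ := Fintype.not_linearIndependent_iff.mp hdep
          set c : Fin (m+1) → ℂ := fun i => if (γ - α i : G) = γ - α i₀ then g i else 0 with hc
          have hcω : ∀ i, c i • ω i = g i • gradProj 𝒲 h𝒲 (γ - α i₀) (ω i) := by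
            intro i
            by_cases hb : (γ - α i : G) = γ - α i₀
            · rw [hc]
              simp only [if_pos hb]
              rw [gradProj_of_mem 𝒲 h𝒲 (show ω i ∈ 𝒲 (γ - α i₀) by rw [← hb]; exact hω i)]
            · rw [hc]
              simp only [if_neg hb]
              rw [gradProj_of_mem_ne 𝒲 h𝒲 (fun hh => hb hh.symm) (hω i), smul_zero, zero_smul]
          have hcsum : ∑ i, c i • ω i = 0 := by
            have h := congrArg (gradProj 𝒲 h𝒲 (γ - α i₀)) hgsum
            rw [map_sum, map_zero] at h
            rw [← h]
            refine Finset.sum_congr rfl fun i _ => ?_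
            rw [hcω i, map_smul]
          have hci₀ : c i₀ = g i₀ := by rw [hc]; simp
          have hωi₀ : v i₀ ⊗ₜ[ℂ] ω i₀
              = - (g i₀)⁻¹ • ∑ j : Fin m, c (i₀.succAbove j) • (v i₀ ⊗ₜ[ℂ] ω (i₀.succAbove j)) := by
            have h2 := Fin.sum_univ_succAbove (fun i => c i • ω i) i₀
            rw [hcsum] at h2
            have h1 : c i₀ • ω i₀ = - ∑ j : Fin m, c (i₀.succAbove j) • ω (i₀.succAbove j) :=
              eq_neg_of_add_eq_zero_left h2.symm
            have h3 : ω i₀ = - (g i₀)⁻¹ • ∑ j : Fin m, c (i₀.succAbove j) • ω (i₀.succAbove j) := by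
              calc ω i₀ = (g i₀)⁻¹ • (g i₀ • ω i₀) := (inv_smul_smul₀ hgi₀ _).symm
                _ = (g i₀)⁻¹ • (c i₀ • ω i₀) := by rw [hci₀]
                _ = (g i₀)⁻¹ • (- ∑ j : Fin m, c (i₀.succAbove j) • ω (i₀.succAbove j)) := by
                    rw [h1]
                _ = - (g i₀)⁻¹ • ∑ j : Fin m, c (i₀.succAbove j) • ω (i₀.succAbove j) := by
                    rw [smul_neg, neg_smul]
            rw [h3, TensorProduct.tmul_smul, TensorProduct.tmul_sum]
            congr 1
            exact Finset.sum_congr rfl fun j _ => TensorProduct.tmul_smul _ _ _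
          set v' : Fin m → V :=
            fun j => v (i₀.succAbove j) - ((g i₀)⁻¹ * c (i₀.succAbove j)) • v i₀ with hv'
          have hsum_eq : ∑ j : Fin m, v' j ⊗ₜ[ℂ] ω (i₀.succAbove j) = ∑ i, v i ⊗ₜ[ℂ] ω i := by
            rw [Fin.sum_univ_succAbove (fun i => v i ⊗ₜ[ℂ] ω i) i₀, hωi₀]
            calc ∑ j : Fin m, v' j ⊗ₜ[ℂ] ω (i₀.succAbove j)
                = ∑ j : Fin m, (v (i₀.succAbove j) ⊗ₜ[ℂ] ω (i₀.succAbove j)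
                    - (g i₀)⁻¹ • (c (i₀.succAbove j) • (v i₀ ⊗ₜ[ℂ] ω (i₀.succAbove j)))) := by
                  refine Finset.sum_congr rfl fun j _ => ?_
                  rw [hv', TensorProduct.sub_tmul]
                  congr 1
                  rw [← TensorProduct.smul_tmul', mul_smul]
              _ = (∑ j : Fin m, v (i₀.succAbove j) ⊗ₜ[ℂ] ω (i₀.succAbove j))
                    - (g i₀)⁻¹ • ∑ j : Fin m, c (i₀.succAbove j) • (v i₀ ⊗ₜ[ℂ] ω (i₀.succAbove j)) := by
                  rw [Finset.sum_sub_distrib, Finset.smul_sum]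
              _ = - (g i₀)⁻¹ • (∑ j : Fin m, c (i₀.succAbove j) • (v i₀ ⊗ₜ[ℂ] ω (i₀.succAbove j)))
                    + ∑ j : Fin m, v (i₀.succAbove j) ⊗ₜ[ℂ] ω (i₀.succAbove j) := by
                  rw [neg_smul]
                  abel
          have hv'mem : ∀ j, v' j ∈ 𝒱 (α (i₀.succAbove j)) := by
            intro j
            by_cases hcj : c (i₀.succAbove j) = 0
            · rw [hv']
              simp only [hcj, mul_zero, zero_smul, sub_zero]
              exact hv _
            · have hbj : (γ - α (i₀.succAbove j) : G) = γ - α i₀ := by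
                by_contra hb
                exact hcj (if_neg hb)
              have hαj : α (i₀.succAbove j) = α i₀ := sub_right_inj.mp hbj
              have hvmem : v i₀ ∈ 𝒱 (α (i₀.succAbove j)) := by rw [hαj]; exact hv i₀
              exact sub_mem (hv _) (Submodule.smul_mem _ _ hvmem)
          exact hmin m (by omega) ⟨γ, fun j => α (i₀.succAbove j), v',
            fun j => ω (i₀.succAbove j), hv'mem, fun j => hω _,
            by rw [hsum_eq]; exact hmemP, by rw [hsum_eq]; exact hne⟩
        -- Step 2 : all v i are nonzero
        have hvne : ∀ i, v i ≠ 0 := by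
          intro i₀ h0
          have hsum_eq : ∑ j : Fin m, v (i₀.succAbove j) ⊗ₜ[ℂ] ω (i₀.succAbove j)
              = ∑ i, v i ⊗ₜ[ℂ] ω i := by
            rw [Fin.sum_univ_succAbove (fun i => v i ⊗ₜ[ℂ] ω i) i₀, h0,
              TensorProduct.zero_tmul, zero_add]
          exact hmin m (by omega) ⟨γ, fun j => α (i₀.succAbove j), fun j => v (i₀.succAbove j),
            fun j => ω (i₀.succAbove j), fun j => hv _, fun j => hω _,
            by rw [hsum_eq]; exact hmemP, by rw [hsum_eq]; exact hne⟩
        -- Step 3 : uniqueness of coefficients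
        have hzero : ∀ z : Fin (m+1) → V, z 0 = 0 → (∑ i, z i ⊗ₜ[ℂ] ω i) ∈ P → ∀ i, z i = 0 := by
          intro z hz0 hzP
          have hcomp : ∀ δ : G, ∑ i, gradProj 𝒱 h𝒱 (δ - (γ - α i)) (z i) ⊗ₜ[ℂ] ω i = 0 := by
            intro δ
            have hPm := keyP 𝒱 𝒲 h𝒱 h𝒲 hP2' hω hzP δ
            by_contra hne0
            have hsum_eq : ∑ j : Fin m,
                gradProj 𝒱 h𝒱 (δ - (γ - α ((0:Fin (m+1)).succAbove j)))
                  (z ((0:Fin (m+1)).succAbove j)) ⊗ₜ[ℂ] ω ((0:Fin (m+1)).succAbove j)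
                = ∑ i, gradProj 𝒱 h𝒱 (δ - (γ - α i)) (z i) ⊗ₜ[ℂ] ω i := by
              rw [Fin.sum_univ_succAbove
                (fun i => gradProj 𝒱 h𝒱 (δ - (γ - α i)) (z i) ⊗ₜ[ℂ] ω i) (0:Fin (m+1))]
              rw [hz0, map_zero, TensorProduct.zero_tmul, zero_add]
            have hωmem : ∀ j : Fin m, ω ((0:Fin (m+1)).succAbove j)
                ∈ 𝒲 (δ - (δ - (γ - α ((0:Fin (m+1)).succAbove j)))) := by
              intro j
              rw [sub_sub_cancel]
              exact hω _
            exact hmin m (by omega) ⟨δ, fun j => δ - (γ - α ((0:Fin (m+1)).succAbove j)),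
              fun j => gradProj 𝒱 h𝒱 (δ - (γ - α ((0:Fin (m+1)).succAbove j)))
                (z ((0:Fin (m+1)).succAbove j)),
              fun j => ω ((0:Fin (m+1)).succAbove j),
              fun j => gradProj_mem 𝒱 h𝒱 _ _, hωmem,
              by rw [hsum_eq]; exact hPm, by rw [hsum_eq]; exact hne0⟩
          have hproj0 : ∀ (δ : G) (i), gradProj 𝒱 h𝒱 (δ - (γ - α i)) (z i) = 0 := fun δ =>
            eq_zero_of_sum_tmul_eq_zero hωind _ (hcomp δ)
          intro i
          obtain ⟨s, h0, hsum⟩ := gradProj_support 𝒱 h𝒱 (z i)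
          rw [← hsum]
          refine Finset.sum_eq_zero fun μ _ => ?_
          have h5 := hproj0 (μ + (γ - α i)) i
          rwa [add_sub_cancel_right] at h5
        have huniq : ∀ u u' : Fin (m+1) → V, u 0 = u' 0 →
            (∑ i, u i ⊗ₜ[ℂ] ω i) ∈ P → (∑ i, u' i ⊗ₜ[ℂ] ω i) ∈ P → u = u' := by
          intro u u' h00 hPu hPu'
          funext i
          have hz := hzero (fun i => u i - u' i) (by beta_reduce; rw [h00, sub_self])
            (by
              have h6 : ∑ i, (u i - u' i) ⊗ₜ[ℂ] ω i
                  = (∑ i, u i ⊗ₜ[ℂ] ω i) - ∑ i, u' i ⊗ₜ[ℂ] ω i := by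
                rw [← Finset.sum_sub_distrib]
                exact Finset.sum_congr rfl fun i _ => TensorProduct.sub_tmul _ _ _
              rw [h6]
              exact sub_mem hPu hPu') i
          exact sub_eq_zero.mp hz
        -- Step 4 : the first-coefficient submodule is everything
        have hXex : ∀ x : V, ∃ u : Fin (m+1) → V, u 0 = x ∧ (∑ i, u i ⊗ₜ[ℂ] ω i) ∈ P := by
          set X : Submodule A V :=
            { carrier := {x | ∃ u : Fin (m+1) → V, u 0 = x ∧ (∑ i, u i ⊗ₜ[ℂ] ω i) ∈ P}
              add_mem' := by
                rintro x y ⟨u, hu0, huP⟩ ⟨u', hu'0, hu'P⟩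
                refine ⟨fun i => u i + u' i, by show u 0 + u' 0 = x + y; rw [hu0, hu'0], ?_⟩
                have h6 : ∑ i, (u i + u' i) ⊗ₜ[ℂ] ω i
                    = (∑ i, u i ⊗ₜ[ℂ] ω i) + ∑ i, u' i ⊗ₜ[ℂ] ω i := by
                  rw [← Finset.sum_add_distrib]
                  exact Finset.sum_congr rfl fun i _ => TensorProduct.add_tmul _ _ _
                rw [h6]
                exact add_mem huP hu'P
              zero_mem' := ⟨0, rfl, by simp⟩
              smul_mem' := by
                rintro a x ⟨u, hu0, huP⟩
                exact ⟨fun i => a • u i, by show a • u 0 = a • x; rw [hu0], hact a _ u ω huP⟩ } with hX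
          have hXgr : ∀ x ∈ X, ∀ δ : G, gradProj 𝒱 h𝒱 δ x ∈ X := by
            rintro x ⟨u, hu0, huP⟩ δ
            refine ⟨fun i => gradProj 𝒱 h𝒱 ((δ + (γ - α 0)) - (γ - α i)) (u i), ?_,
              keyP 𝒱 𝒲 h𝒱 h𝒲 hP2' hω huP (δ + (γ - α 0))⟩
            show gradProj 𝒱 h𝒱 ((δ + (γ - α 0)) - (γ - α 0)) (u 0) = gradProj 𝒱 h𝒱 δ x
            rw [add_sub_cancel_right, hu0]
          rcases hVsimple X (graded_of_proj 𝒱 h𝒱 X hXgr) with h | h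
          · exfalso
            have hv0X : v 0 ∈ X := ⟨v, rfl, hmemP⟩
            rw [h] at hv0X
            exact hvne 0 (by simpa using hv0X)
          · intro x
            have hxX : x ∈ X := h ▸ Submodule.mem_top
            exact hxX
        -- Step 5 : the intertwining maps
        choose Φ hΦ0 hΦP using hXex
        have hΦv : Φ (v 0) = v := huniq _ _ (hΦ0 (v 0)) (hΦP (v 0)) hmemP
        have hΦadd : ∀ x y, Φ (x + y) = fun i => Φ x i + Φ y i := by
          intro x y
          refine huniq _ _ ?_ (hΦP _) ?_
          · show Φ (x + y) 0 = Φ x 0 + Φ y 0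
            rw [hΦ0, hΦ0, hΦ0]
          · have h6 : ∑ i, (Φ x i + Φ y i) ⊗ₜ[ℂ] ω i
                = (∑ i, Φ x i ⊗ₜ[ℂ] ω i) + ∑ i, Φ y i ⊗ₜ[ℂ] ω i := by
              rw [← Finset.sum_add_distrib]
              exact Finset.sum_congr rfl fun i _ => TensorProduct.add_tmul _ _ _
            rw [h6]
            exact add_mem (hΦP x) (hΦP y)
        have hΦsmulA : ∀ (a : A) x, Φ (a • x) = fun i => a • Φ x i := by
          intro a x
          refine huniq _ _ ?_ (hΦP _) (hact a _ (Φ x) ω (hΦP x))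
          show Φ (a • x) 0 = a • Φ x 0
          rw [hΦ0, hΦ0]
        have hΦgrad : ∀ (δ : G), ∀ x ∈ 𝒱 δ, ∀ i, Φ x i ∈ 𝒱 ((δ + (γ - α 0)) - (γ - α i)) := by
          intro δ x hx i
          have heq : Φ x = fun i => gradProj 𝒱 h𝒱 ((δ + (γ - α 0)) - (γ - α i)) (Φ x i) := by
            refine huniq _ _ ?_ (hΦP x) (keyP 𝒱 𝒲 h𝒱 h𝒲 hP2' hω (hΦP x) (δ + (γ - α 0)))
            show Φ x 0 = gradProj 𝒱 h𝒱 ((δ + (γ - α 0)) - (γ - α 0)) (Φ x 0)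
            rw [add_sub_cancel_right, hΦ0]
            exact (gradProj_of_mem 𝒱 h𝒱 hx).symm
          have h7 := congrFun heq i
          rw [h7]
          exact gradProj_mem 𝒱 h𝒱 _ _
        -- Step 6 : all degrees agree and all v i are multiples of v 0
        have hcollin : ∀ i : Fin (m+1), (γ - α i = γ - α 0) ∧ ∃ μ : ℂ, v i = μ • v 0 := by
          intro i
          set φ : V →ₗ[A] V :=
            { toFun := fun x => Φ x i
              map_add' := fun x y => by
                show Φ (x + y) i = Φ x i + Φ y i
                rw [hΦadd]
              map_smul' := fun a x => by
                show Φ (a • x) i = a • Φ x i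
                rw [hΦsmulA] } with hφdef
          have hφgr : ∀ δ : G, ∀ x ∈ 𝒱 δ, φ x ∈ 𝒱 (δ + ((γ - α 0) - (γ - α i))) := by
            intro δ x hx
            have h5 := hΦgrad δ x hx i
            rwa [add_sub_assoc] at h5
          have hφv0 : φ (v 0) = v i := by
            show Φ (v 0) i = v i
            rw [hΦv]
          have hker : LinearMap.ker φ = ⊥ := by
            rcases hVsimple _ (ker_graded 𝒱 h𝒱 _ φ hφgr) with h | h
            · exact h
            · exfalso
              have hv0k : v 0 ∈ LinearMap.ker φ := by rw [h]; trivial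
              have h6 : φ (v 0) = 0 := hv0k
              rw [hφv0] at h6
              exact hvne i h6
          have hrange : LinearMap.range φ = ⊤ := by
            rcases hVsimple _ (range_graded 𝒱 h𝒱 _ φ hφgr) with h | h
            · exfalso
              have hvir : v i ∈ LinearMap.range φ := ⟨v 0, hφv0⟩
              rw [h] at hvir
              exact hvne i (by simpa using hvir)
            · exact h
          have hβ0 : (γ - α i : G) = γ - α 0 := by
            by_contra hne'
            refine hnoshift ((γ - α 0) - (γ - α i)) (sub_ne_zero.mpr (fun hcc => hne' hcc.symm)) ?_
            exact ⟨LinearEquiv.ofBijective φ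
              ⟨LinearMap.ker_eq_bot.mp hker, LinearMap.range_eq_top.mp hrange⟩,
              fun δ => image_eq 𝒱 h𝒱 _ φ hφgr hrange δ⟩
          refine ⟨hβ0, ?_⟩
          have hφgr0 : ∀ δ : G, ∀ x ∈ 𝒱 δ, φ x ∈ 𝒱 δ := by
            intro δ x hx
            have h5 := hφgr δ x hx
            rwa [hβ0, sub_self, add_zero] at h5
          haveI : Nontrivial (𝒱 (α 0)) := by
            refine ⟨⟨⟨v 0, hv 0⟩, 0, ?_⟩⟩
            intro hcc
            exact hvne 0 (by simpa using congrArg Subtype.val hcc)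
          haveI := hVfin (α 0)
          have hφC : ∀ (cc : ℂ) (x : V), φ (cc • x) = cc • φ x := by
            intro cc x
            rw [← algebraMap_smul A cc x, map_smul, algebraMap_smul]
          set f : Module.End ℂ (𝒱 (α 0)) :=
            { toFun := fun z => ⟨φ z.1, hφgr0 (α 0) z.1 z.2⟩
              map_add' := fun z z' => Subtype.ext (map_add φ _ _)
              map_smul' := fun cc z => Subtype.ext (by simpa using hφC cc z.1) } with hf
          obtain ⟨μ0, hμ0⟩ := Module.End.exists_eigenvalue f
          obtain ⟨z, hz⟩ := hμ0.exists_hasEigenvector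
          have hzV : φ (z.1 : V) = μ0 • (z.1 : V) := by
            have h8 : f z = μ0 • z := Module.End.mem_eigenspace_iff.mp hz.1
            have h9 := congrArg Subtype.val h8
            simpa [hf] using h9
          set ψ : V →ₗ[A] V :=
            { toFun := fun x => φ x - μ0 • x
              map_add' := fun x y => by
                show φ (x + y) - μ0 • (x + y) = (φ x - μ0 • x) + (φ y - μ0 • y)
                rw [map_add, smul_add]
                abel
              map_smul' := fun a x => by
                show φ (a • x) - μ0 • (a • x) = a • (φ x - μ0 • x)
                rw [map_smul, smul_sub, smul_comm a μ0 x] } with hψ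
          have hψgr : ∀ δ : G, ∀ x ∈ 𝒱 δ, ψ x ∈ 𝒱 (δ + 0) := by
            intro δ x hx
            rw [add_zero]
            exact sub_mem (hφgr0 δ x hx) (Submodule.smul_mem _ _ hx)
          have hψz : ψ (z.1 : V) = 0 := by
            show φ (z.1 : V) - μ0 • (z.1 : V) = 0
            rw [hzV, sub_self]
          have hψtop : LinearMap.ker ψ = ⊤ := by
            rcases hVsimple _ (ker_graded 𝒱 h𝒱 0 ψ hψgr) with h | h
            · exfalso
              have hzker : (z.1 : V) ∈ LinearMap.ker ψ := hψz
              rw [h] at hzker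
              have hz0 : (z.1 : V) = 0 := by simpa using hzker
              exact hz.2 (Subtype.ext hz0)
            · exact h
          have hψv0 : ψ (v 0) = 0 := by
            have hm : v 0 ∈ LinearMap.ker ψ := by rw [hψtop]; trivial
            exact hm
          have h7 : φ (v 0) - μ0 • v 0 = 0 := hψv0
          refine ⟨μ0, ?_⟩
          rw [← hφv0]
          exact sub_eq_zero.mp h7
        -- Step 7 : contradiction via a length-one representation
        have hβall : ∀ i : Fin (m+1), (γ - α i : G) = γ - α 0 := fun i => (hcollin i).1
        choose μ hμ using fun i => (hcollin i).2
        have hteq : (∑ _i : Fin 1, v 0 ⊗ₜ[ℂ] (∑ i, μ i • ω i)) = ∑ i, v i ⊗ₜ[ℂ] ω i := by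
          rw [Fin.sum_univ_one, TensorProduct.tmul_sum]
          refine Finset.sum_congr rfl fun i _ => ?_
          rw [TensorProduct.tmul_smul, TensorProduct.smul_tmul', ← hμ i]
        have hωsum : (∑ i, μ i • ω i) ∈ 𝒲 (γ - α 0) := by
          refine sum_mem fun i _ => Submodule.smul_mem _ _ ?_
          rw [← hβall i]
          exact hω i
        exact hmin 1 (by omega) ⟨γ, fun _ => α 0, fun _ => v 0, fun _ => ∑ i, μ i • ω i,
          fun _ => hv 0, fun _ => hωsum, by rw [hteq]; exact hmemP, by rw [hteq]; exact hne⟩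

    subst hN1
    refine ⟨α 0, γ - α 0, v 0, ω 0, hv 0, hω 0, ?_, ?_⟩
    · simpa [Fin.sum_univ_one] using hmemP
    · simpa [Fin.sum_univ_one] using hne
  -- endgame
  obtain ⟨a0, b0, x, yy, hxmem, hyymem, hxyP, hxyne⟩ := hpure
  have hxne : x ≠ 0 := fun h => hxyne (by rw [h, TensorProduct.zero_tmul])
  have hyne : yy ≠ 0 := fun h => hxyne (by rw [h, TensorProduct.tmul_zero])
  have hspanV : Submodule.span A {x} = ⊤ := by
    have hgr : ∀ u ∈ Submodule.span A {x}, ∀ δ : G,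
        gradProj 𝒱 h𝒱 δ u ∈ Submodule.span A {x} := by
      intro u hu δ
      obtain ⟨a, rfl⟩ := Submodule.mem_span_singleton.mp hu
      obtain ⟨s, h0, hsum⟩ := gradProj_support 𝒜 h𝒜 a
      have hax : a • x = ∑ g ∈ s, (gradProj 𝒜 h𝒜 g a) • x := by
        rw [← Finset.sum_smul, hsum]
      rw [hax, map_sum]
      refine sum_mem fun g _ => ?_
      have hmem' : (gradProj 𝒜 h𝒜 g a) • x ∈ 𝒱 (g + a0) :=
        h𝒱smul g a0 _ (gradProj_mem 𝒜 h𝒜 g a) x hxmem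
      by_cases hg : δ = g + a0
      · subst hg
        rw [gradProj_of_mem 𝒱 h𝒱 hmem']
        exact Submodule.mem_span_singleton.mpr ⟨_, rfl⟩
      · rw [gradProj_of_mem_ne 𝒱 h𝒱 hg hmem']
        exact zero_mem _
    rcases hVsimple _ (graded_of_proj 𝒱 h𝒱 _ hgr) with h | h
    · exfalso
      apply hxne
      have := Submodule.mem_span_singleton_self (R := A) x
      rw [h] at this
      simpa using this
    · exact h
  have hspanW : Submodule.span B {yy} = ⊤ := by
    have hgr : ∀ u ∈ Submodule.span B {yy}, ∀ δ : G,
        gradProj 𝒲 h𝒲 δ u ∈ Submodule.span B {yy} := by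
      intro u hu δ
      obtain ⟨b, rfl⟩ := Submodule.mem_span_singleton.mp hu
      obtain ⟨s, h0, hsum⟩ := gradProj_support ℬ hℬ b
      have hbx : b • yy = ∑ g ∈ s, (gradProj ℬ hℬ g b) • yy := by
        rw [← Finset.sum_smul, hsum]
      rw [hbx, map_sum]
      refine sum_mem fun g _ => ?_
      have hmem' : (gradProj ℬ hℬ g b) • yy ∈ 𝒲 (g + b0) :=
        h𝒲smul g b0 _ (gradProj_mem ℬ hℬ g b) yy hyymem
      by_cases hg : δ = g + b0
      · subst hg
        rw [gradProj_of_mem 𝒲 h𝒲 hmem']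
        exact Submodule.mem_span_singleton.mpr ⟨_, rfl⟩
      · rw [gradProj_of_mem_ne 𝒲 h𝒲 hg hmem']
        exact zero_mem _
    rcases hWsimple _ (graded_of_proj 𝒲 h𝒲 _ hgr) with h | h
    · exfalso
      apply hyne
      have := Submodule.mem_span_singleton_self (R := B) yy
      rw [h] at this
      simpa using this
    · exact h
  rw [eq_top_iff]
  rintro t -
  induction t using TensorProduct.induction_on with
  | zero => exact zero_mem P
  | tmul x' y' =>
    have hx' : x' ∈ Submodule.span A {x} := hspanV ▸ Submodule.mem_top
    have hy' : y' ∈ Submodule.span B {yy} := hspanW ▸ Submodule.mem_top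
    obtain ⟨a, ha⟩ := Submodule.mem_span_singleton.mp hx'
    obtain ⟨b, hb⟩ := Submodule.mem_span_singleton.mp hy'
    have h := hP1 a b _ hxyP
    rw [TensorProduct.map_tmul] at h
    have : (a • x) ⊗ₜ[ℂ] (b • yy) ∈ P := h
    rwa [ha, hb] at this
  | add t t' ht ht' => exact add_mem ht ht'
end
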